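/- Let V, U : ℝ^d → ℝ ∪ {+∞} be strictly convex functions such that: (i) V is lower semicontinuous and α-convex for some α > 0; (ii) U is real-valued, C¹, admits a minimiser, and ∇U is β-Lipschitz for some β > 0. Let x = argmin V, y = argmin U, and z = argmin(V + U). Then (1/α)|z − y| ≥ max{ (1/β)|z − x|, (1/(α + β))|y − x| }. -/

import Mathlib

open MeasureTheory ENNReal Filter
open scoped RealInnerProductSpace NNReal

noncomputable section

/-- `ℝ^d` with the Euclidean structure. -/
abbrev Euc (d : ℕ) := EuclideanSpace ℝ (Fin d)

/-- `π` is a coupling of `μ` and `ν`. -/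
def IsCoupling {α β : Type*} [MeasurableSpace α] [MeasurableSpace β]
    (π : Measure (α × β)) (μ : Measure α) (ν : Measure β) : Prop :=
  π.map Prod.fst = μ ∧ π.map Prod.snd = ν

/-- The `L^∞`-optimal transport cost for a general cost function `c`. -/
noncomputable def WinfCost {α : Type*} [MeasurableSpace α]
    (c : α × α → ℝ≥0∞) (μ ν : Measure α) : ℝ≥0∞ :=
  ⨅ (π : Measure (α × α)) (_ : IsCoupling π μ ν), essSup c π

/-- The `L^∞`-Wasserstein distance. -/
noncomputable def Winf {α : Type*} [MeasurableSpace α] [PseudoEMetricSpace α]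
    (μ ν : Measure α) : ℝ≥0∞ :=
  WinfCost (fun p => edist p.1 p.2) μ ν

/-- The measure with density `f` with respect to the reference (Lebesgue) measure. -/
noncomputable def densityMeasure {α : Type*} [MeasureSpace α] (f : α → ℝ) : Measure α :=
  volume.withDensity (fun x => ENNReal.ofReal (f x))

/-- `f` is a probability density. -/
def IsProbDensity {α : Type*} [MeasureSpace α] (f : α → ℝ) : Prop :=
  Measurable f ∧ (∀ x, 0 ≤ f x) ∧ (∫ x, f x) = 1

/-- `μ` is log-concave relative to the quadratic form `Q`, i.e. `μ = e^{-U}` where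
`U : V → ℝ ∪ {+∞}` satisfies `U(tx+(1-t)y) ≤ tU(x)+(1-t)U(y) - t(1-t)/2 · Q(x-y)`;
equivalently `x ↦ U(x) - Q(x)/2` is convex.  (For `Q z = κ‖z‖²` this is
`κ`-log-concavity.) -/
def QLogConcave {V : Type*} [AddCommGroup V] [Module ℝ V] (Q : V → ℝ) (μ : V → ℝ) : Prop :=
  ∀ x y : V, ∀ t : ℝ, 0 ≤ t → t ≤ 1 →
    μ x ^ t * μ y ^ (1 - t) * Real.exp (t * (1 - t) / 2 * Q (x - y))
      ≤ μ (t • x + (1 - t) • y)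

set_option maxHeartbeats 1000000 in
/-- Comparison of minimisers: if `V` is strictly convex, lsc and
`α`-convex (possibly `+∞`-valued), `U` is real-valued, strictly convex, `C¹` with
`β`-Lipschitz gradient, and `x, y, z` are the minimisers of `V`, `U`, `V + U`
respectively, then `(1/α)|z - y| ≥ max{(1/β)|z - x|, (1/(α+β))|y - x|}`. -/
theorem minimiser_comparison {d : ℕ} (V : Euc d → EReal) (U : Euc d → ℝ) (α β : ℝ)
    (x y z : Euc d)
    (hα : 0 < α) (hβ : 0 < β)
    (hVbot : ∀ w, V w ≠ ⊥)
    (hVstrict : ∀ a b : Euc d, a ≠ b → ∀ t : ℝ, 0 < t → t < 1 →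
      V (t • a + (1 - t) • b) < (t : EReal) * V a + ((1 - t : ℝ) : EReal) * V b)
    (hVlsc : LowerSemicontinuous V)
    (hVconv : ∀ a b : Euc d, ∀ t : ℝ, 0 < t → t < 1 →
      V (t • a + (1 - t) • b)
        ≤ (t : EReal) * V a + ((1 - t : ℝ) : EReal) * V b
            - ((α * t * (1 - t) / 2 * ‖a - b‖ ^ 2 : ℝ) : EReal))
    (hUstrict : StrictConvexOn ℝ Set.univ U)
    (hU : ContDiff ℝ 1 U)
    (hgrad : LipschitzWith (Real.toNNReal β) (fun w => gradient U w))
    (hx : ∀ w, V x ≤ V w)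
    (hy : ∀ w, U y ≤ U w)
    (hz : ∀ w, V z + (U z : EReal) ≤ V w + (U w : EReal)) :
    (1 / β) * ‖z - x‖ ≤ (1 / α) * ‖z - y‖ ∧
    (1 / (α + β)) * ‖y - x‖ ≤ (1 / α) * ‖z - y‖ := by
  have hUdiff : ∀ w, DifferentiableAt ℝ U w :=
    fun w => (hU.differentiable one_ne_zero).differentiableAt
  -- gradient of U vanishes at y
  have hgy : gradient U y = 0 := by
    have h0 : fderiv ℝ U y = 0 :=
      (IsLocalMin.fderiv_eq_zero (IsMinOn.isLocalMin
        (fun w _ => hy w) (Filter.univ_mem)))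
    rw [gradient, h0, map_zero]
  have hglip : ‖gradient U z‖ ≤ β * ‖z - y‖ := by
    have h1 := hgrad.dist_le_mul z y
    rw [dist_eq_norm, dist_eq_norm] at h1
    simpa [hgy, Real.coe_toNNReal β hβ.le] using h1
  -- key inequality
  have key : α * ‖z - x‖ ≤ β * ‖z - y‖ := by
    by_cases hxz : x = z
    · subst hxz
      simp only [sub_self, norm_zero, mul_zero]
      positivity
    -- V z is finite
    have hVzt : V z ≠ ⊤ := by
      intro htop
      have hs := hVstrict x z hxz (1/2) (by norm_num) (by norm_num)
      have hwt : V ((1/2 : ℝ) • x + (1 - (1/2) : ℝ) • z) < ⊤ := lt_of_lt_of_le hs le_top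
      have h2 := hz ((1/2 : ℝ) • x + (1 - (1/2) : ℝ) • z)
      rw [htop] at h2
      have h3 : (⊤ : EReal) + (U z : EReal) = ⊤ := by
        rw [EReal.top_add_of_ne_bot (by exact EReal.coe_ne_bot _)]
      rw [h3] at h2
      have h4 : V ((1/2 : ℝ) • x + (1 - (1/2) : ℝ) • z) + (U ((1/2 : ℝ) • x + (1 - (1/2) : ℝ) • z) : EReal) < ⊤ :=
        EReal.add_lt_top hwt.ne (EReal.coe_ne_top _)
      exact absurd (top_le_iff.mp h2) (by exact fun h => absurd h (ne_of_lt h4))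
    have hVxt : V x ≠ ⊤ := fun h => hVzt (top_le_iff.mp (h ▸ hx z))
    set vx := (V x).toReal with hvxdef
    set vz := (V z).toReal with hvzdef
    have hvx : (vx : EReal) = V x := EReal.coe_toReal hVxt (hVbot x)
    have hvz : (vz : EReal) = V z := EReal.coe_toReal hVzt (hVbot z)
    set c := ‖z - x‖ ^ 2 with hcdef
    have hnorm : ‖x - z‖ = ‖z - x‖ := norm_sub_rev _ _
    -- strong convexity + minimality of x
    have hB : ∀ t : ℝ, 0 < t → t < 1 → vx ≤ vz - α * (1 - t) / 2 * c := by
      intro t ht ht1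
      have h1 : (vx : EReal) ≤ ((t * vz + (1 - t) * vx - α * t * (1 - t) / 2 * c : ℝ) : EReal) := by
        calc (vx : EReal) = V x := hvx
        _ ≤ V (t • z + (1 - t) • x) := hx _
        _ ≤ (t : EReal) * V z + ((1 - t : ℝ) : EReal) * V x
            - ((α * t * (1 - t) / 2 * ‖z - x‖ ^ 2 : ℝ) : EReal) := hVconv z x t ht ht1
        _ = _ := by rw [← hvx, ← hvz]; norm_cast
      have h2 : vx ≤ t * vz + (1 - t) * vx - α * t * (1 - t) / 2 * c := by exact_mod_cast h1
      have h3 : t * vx ≤ t * (vz - α * (1 - t) / 2 * c) := by nlinarith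
      exact le_of_mul_le_mul_left h3 ht
    -- slope lower bound
    have hC : ∀ t : ℝ, t ∈ Set.Ioo (0:ℝ) 1 →
        α * (1 - t) * c ≤ slope (fun s : ℝ => U (z + s • (x - z))) 0 t := by
      rintro t ⟨ht, ht1⟩
      have hweq : t • x + (1 - t) • z = z + t • (x - z) := by
        rw [sub_smul, one_smul, smul_sub]; abel
      have h2 : V (t • x + (1 - t) • z)
          ≤ ((t * vx + (1 - t) * vz - α * t * (1 - t) / 2 * c : ℝ) : EReal) := by
        calc V (t • x + (1 - t) • z)
            ≤ (t : EReal) * V x + ((1 - t : ℝ) : EReal) * V z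
              - ((α * t * (1 - t) / 2 * ‖x - z‖ ^ 2 : ℝ) : EReal) := hVconv x z t ht ht1
        _ = _ := by rw [← hvx, ← hvz, hnorm]; norm_cast
      have hwt : V (t • x + (1 - t) • z) ≠ ⊤ := (lt_of_le_of_lt h2 (EReal.coe_lt_top _)).ne
      set vw := (V (t • x + (1 - t) • z)).toReal with hvwdef
      have hvw : (vw : EReal) = V (t • x + (1 - t) • z) := EReal.coe_toReal hwt (hVbot _)
      have h3 : vw ≤ t * vx + (1 - t) * vz - α * t * (1 - t) / 2 * c := by
        rw [← hvw] at h2; exact_mod_cast h2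
      have h4 : vz + U z ≤ vw + U (t • x + (1 - t) • z) := by
        have h5 := hz (t • x + (1 - t) • z)
        rw [← hvz, ← hvw] at h5
        exact_mod_cast h5
      have h5 := hB t ht ht1
      have h6 : α * t * (1 - t) * c ≤ U (t • x + (1 - t) • z) - U z := by nlinarith
      rw [slope_def_field]
      simp only [sub_zero, zero_smul, add_zero]
      rw [le_div_iff₀ ht, hweq] at *
      nlinarith
    -- derivative of U along the segment
    have hφ : HasDerivAt (fun s : ℝ => U (z + s • (x - z))) ⟪gradient U z, x - z⟫ 0 := by
      have hline : HasDerivAt (fun s : ℝ => z + s • (x - z)) (x - z) 0 := by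
        simpa using ((hasDerivAt_id (0:ℝ)).smul_const (x - z)).const_add z
      have hg : HasFDerivAt U (InnerProductSpace.toDual ℝ _ (gradient U z)) z :=
        (hUdiff z).hasGradientAt.hasFDerivAt
      have hg' : HasFDerivAt U (InnerProductSpace.toDual ℝ _ (gradient U z)) (z + (0:ℝ) • (x - z)) := by
        simpa using hg
      have := hg'.comp_hasDerivAt 0 hline
      rw [InnerProductSpace.toDual_apply_apply] at this; exact this
    have hslope : Filter.Tendsto (slope (fun s : ℝ => U (z + s • (x - z))) 0)
        (nhdsWithin 0 (Set.Ioi 0)) (nhds ⟪gradient U z, x - z⟫) :=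
      (hasDerivAt_iff_tendsto_slope.mp hφ).mono_left
        (nhdsWithin_mono _ (fun t ht => ne_of_gt ht))
    have hlin : Filter.Tendsto (fun t : ℝ => α * (1 - t) * c)
        (nhdsWithin 0 (Set.Ioi 0)) (nhds (α * c)) := by
      have hcont : Continuous (fun t : ℝ => α * (1 - t) * c) :=
        ((continuous_const.mul (continuous_const.sub continuous_id)).mul continuous_const)
      have h := hcont.tendsto 0
      rw [show α * (1 - (0:ℝ)) * c = α * c by ring] at h
      exact h.mono_left nhdsWithin_le_nhds
    have hkey : α * c ≤ ⟪gradient U z, x - z⟫ := by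
      refine le_of_tendsto_of_tendsto hlin hslope ?_
      filter_upwards [Ioo_mem_nhdsGT_of_mem (Set.mem_Ico.mpr ⟨le_rfl, one_pos⟩)] with t ht
      exact hC t ht
    have hinner : ⟪gradient U z, x - z⟫ ≤ ‖gradient U z‖ * ‖x - z‖ := real_inner_le_norm _ _
    have hpos : (0:ℝ) < ‖z - x‖ := norm_pos_iff.mpr (sub_ne_zero.mpr (Ne.symm hxz))
    have hfin : α * ‖z - x‖ ^ 2 ≤ β * ‖z - y‖ * ‖z - x‖ := by
      calc α * ‖z - x‖ ^ 2 = α * c := by rw [hcdef]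
      _ ≤ ⟪gradient U z, x - z⟫ := hkey
      _ ≤ ‖gradient U z‖ * ‖x - z‖ := hinner
      _ ≤ β * ‖z - y‖ * ‖z - x‖ := by
          rw [hnorm]; exact mul_le_mul_of_nonneg_right hglip (norm_nonneg _)
    nlinarith [hfin, hpos]
  -- conclude
  have htri : ‖y - x‖ ≤ ‖y - z‖ + ‖z - x‖ := by
    have := dist_triangle y z x
    simpa [dist_eq_norm] using this
  have hyz : ‖y - z‖ = ‖z - y‖ := norm_sub_rev _ _
  rw [hyz] at htri
  constructor
  · rw [one_div, one_div, inv_mul_eq_div, inv_mul_eq_div, div_le_div_iff₀ hβ hα]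
    linarith [key]
  · rw [one_div, one_div, inv_mul_eq_div, inv_mul_eq_div,
      div_le_div_iff₀ (by positivity) hα]
    linarith [mul_le_mul_of_nonneg_left htri hα.le, key]

end
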